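/- arXiv:1502.06168 — 2 statements merged into one kernel-verified Lean document; each statement's English description precedes it below -/
import Mathlib

section
/- Every interval graph is perfect: for every induced subgraph of an interval graph, the clique cover number equals the independence number. -/
open SimpleGraph

/-- `s` is an independent set in `G`: pairwise nonadjacent vertices. -/
def SimpleGraph.IsIndepFinset {V : Type*} (G : SimpleGraph V) (s : Finset V) : Prop :=
  (s : Set V).Pairwise fun a b => ¬ G.Adj a b

/-- The independence number `α(G)`: the largest size of an independent set. -/
noncomputable def indepNum {V : Type*} (G : SimpleGraph V) : ℕ :=
  sSup {n | ∃ s : Finset V, G.IsIndepFinset s ∧ s.card = n}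

/-- `C` is a clique cover of `G`: a family of cliques covering every vertex. -/
def SimpleGraph.IsCliqueCover {V : Type*} (G : SimpleGraph V) (C : Finset (Finset V)) : Prop :=
  (∀ c ∈ C, G.IsClique (c : Set V)) ∧ ∀ v : V, ∃ c ∈ C, v ∈ c

/-- The clique cover number `β(G)`: minimum number of cliques covering `V(G)`. -/
noncomputable def cliqueCoverNum {V : Type*} (G : SimpleGraph V) : ℕ :=
  sInf {n | ∃ C : Finset (Finset V), G.IsCliqueCover C ∧ C.card = n}

/-- `G` is an interval graph: the intersection graph of closed real intervals. -/
def IsIntervalGraph {V : Type*} (G : SimpleGraph V) : Prop :=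
  ∃ a b : V → ℝ, ∀ u v : V, G.Adj u v ↔
    u ≠ v ∧ (Set.Icc (a u) (b u) ∩ Set.Icc (a v) (b v)).Nonempty

/-- `G` is perfect (stated via clique covers): `β = α` on every induced subgraph. -/
def IsPerfectGraph {V : Type*} (G : SimpleGraph V) : Prop :=
  ∀ W : Finset V, cliqueCoverNum (G.induce (W : Set V)) = _root_.indepNum (G.induce (W : Set V))

/-- `φ(G,H)`: the maximum of `β(G[W])/α(G[W])` over subsets `W` inducing cliques in `H`. -/
noncomputable def phi {V : Type*} (G H : SimpleGraph V) : ℝ :=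
  sSup {x : ℝ | ∃ W : Finset V, H.IsClique (W : Set V) ∧
    x = (cliqueCoverNum (G.induce (W : Set V)) : ℝ) / (_root_.indepNum (G.induce (W : Set V)) : ℝ)}


lemma indep_card_le_cover_card {V : Type*} (G : SimpleGraph V) (s : Finset V)
    (hs : G.IsIndepFinset s) (C : Finset (Finset V)) (hC : G.IsCliqueCover C) :
    s.card ≤ C.card := by
  classical
  choose f hf1 hf2 using hC.2
  refine Finset.card_le_card_of_injOn f (fun v _ => hf1 v) ?_
  intro u hu w hw huw
  by_contra hne
  exact hs hu hw hne (hC.1 (f u) (hf1 u) (hf2 u) (by rw [huw]; exact hf2 w) hne)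

lemma greedy {V : Type*} [DecidableEq V] (G : SimpleGraph V) (a b : V → ℝ)
    (hab : ∀ u v : V, G.Adj u v ↔
      u ≠ v ∧ (Set.Icc (a u) (b u) ∩ Set.Icc (a v) (b v)).Nonempty)
    (S : Finset V) :
    ∃ (C : Finset (Finset V)) (s : Finset V),
      (∀ c ∈ C, G.IsClique (c : Set V)) ∧ (∀ c ∈ C, c ⊆ S) ∧
      (∀ v ∈ S, ∃ c ∈ C, v ∈ c) ∧ s ⊆ S ∧ G.IsIndepFinset s ∧ C.card = s.card := by
  classical
  induction S using Finset.strongInduction with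
  | _ S ih =>
  rcases S.eq_empty_or_nonempty with rfl | hS
  · exact ⟨∅, ∅, by simp, by simp, by simp, by simp, by simp [SimpleGraph.IsIndepFinset], rfl⟩
  obtain ⟨v, hvS, hmin⟩ := S.exists_min_image b hS
  -- choose the clique c containing v
  obtain ⟨c, hcS, hvc, hclique, hkey⟩ :
      ∃ c : Finset V, c ⊆ S ∧ v ∈ c ∧ G.IsClique (c : Set V) ∧
        (∀ u ∈ S, G.Adj v u → u ∈ c) := by
    by_cases hav : a v ≤ b v
    · refine ⟨S.filter (fun u => a u ≤ b v ∧ b v ≤ b u), Finset.filter_subset _ _,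
        by simp [hvS, hav], ?_, ?_⟩
      · intro u hu w hw hne
        simp only [Finset.coe_filter, Set.mem_setOf_eq, Finset.mem_filter] at hu hw
        rw [hab]
        exact ⟨hne, ⟨b v, ⟨hu.2.1, hu.2.2⟩, ⟨hw.2.1, hw.2.2⟩⟩⟩
      · intro u huS hadj
        obtain ⟨x, ⟨hx1, hx2⟩, ⟨hx3, hx4⟩⟩ := ((hab v u).mp hadj).2
        exact Finset.mem_filter.mpr ⟨huS, le_trans hx3 hx2, hmin u huS⟩
    · refine ⟨{v}, by simpa using hvS, Finset.mem_singleton_self v, by simp, ?_⟩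
      intro u huS hadj
      obtain ⟨x, ⟨hx1, hx2⟩, _⟩ := ((hab v u).mp hadj).2
      exact absurd (le_trans hx1 hx2) hav
  have hssub : S \ c ⊂ S := by
    refine Finset.sdiff_ssubset ?_ ?_  -- maybe wrong name
    · exact hcS
    · exact ⟨v, hvc⟩
  obtain ⟨C', s', hC'cl, hC'sub, hC'cov, hs'sub, hs'ind, hcard⟩ := ih (S \ c) hssub
  have hvns' : v ∉ s' := fun hv => (Finset.mem_sdiff.mp (hs'sub hv)).2 hvc
  have hcnC' : c ∉ C' := fun hc => (Finset.mem_sdiff.mp (hC'sub c hc hvc)).2 hvc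
  refine ⟨insert c C', insert v s', ?_, ?_, ?_, ?_, ?_, ?_⟩
  · intro d hd
    rcases Finset.mem_insert.mp hd with rfl | hd
    · exact hclique
    · exact hC'cl d hd
  · intro d hd
    rcases Finset.mem_insert.mp hd with rfl | hd
    · exact hcS
    · exact (hC'sub d hd).trans (Finset.sdiff_subset)
  · intro u huS
    by_cases huc : u ∈ c
    · exact ⟨c, Finset.mem_insert_self _ _, huc⟩
    · obtain ⟨d, hd, hud⟩ := hC'cov u (Finset.mem_sdiff.mpr ⟨huS, huc⟩)
      exact ⟨d, Finset.mem_insert_of_mem hd, hud⟩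
  · intro u hu
    rcases Finset.mem_insert.mp hu with rfl | hu
    · exact hvS
    · exact Finset.sdiff_subset (hs'sub hu)
  · -- independence
    have hsymm : Symmetric (fun x y : V => ¬ G.Adj x y) := fun x y h h' => h h'.symm
    rw [SimpleGraph.IsIndepFinset, Finset.coe_insert]
    haveI : Std.Symm (fun x y : V => ¬ G.Adj x y) := ⟨fun x y => @hsymm x y⟩
    rw [Set.pairwise_insert_of_symm]
    refine ⟨hs'ind, ?_⟩
    intro u hu hne hadj
    have huS : u ∈ S \ c := hs'sub hu
    exact (Finset.mem_sdiff.mp huS).2 (hkey u (Finset.mem_sdiff.mp huS).1 hadj)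
  · rw [Finset.card_insert_of_notMem hcnC', Finset.card_insert_of_notMem hvns', hcard]

theorem interval_graph_perfect {V : Type*} (G : SimpleGraph V)
    (h : IsIntervalGraph G) :
    ∀ W : Finset V, cliqueCoverNum (G.induce (W : Set V)) =
      _root_.indepNum (G.induce (W : Set V)) := by
  classical
  obtain ⟨a, b, hab⟩ := h
  intro W
  set V' := {x // x ∈ (W : Set V)}
  set G' := G.induce (W : Set V) with hG'
  have hab' : ∀ u v : V', G'.Adj u v ↔
      u ≠ v ∧ (Set.Icc (a u.1) (b u.1) ∩ Set.Icc (a v.1) (b v.1)).Nonempty := by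
    intro u v
    have : G'.Adj u v ↔ G.Adj u.1 v.1 := Iff.rfl
    rw [this, hab]
    constructor
    · rintro ⟨hne, hx⟩; exact ⟨fun e => hne (congrArg Subtype.val e), hx⟩
    · rintro ⟨hne, hx⟩; exact ⟨fun e => hne (Subtype.ext e), hx⟩
  obtain ⟨C, s, hCcl, _, hCcov, _, hsind, hcard⟩ :=
    greedy G' (fun u => a u.1) (fun u => b u.1) hab' Finset.univ
  have hCcover : G'.IsCliqueCover C :=
    ⟨hCcl, fun v => hCcov v (Finset.mem_univ v)⟩
  -- bounded above
  have hbdd : BddAbove {n | ∃ s : Finset V', G'.IsIndepFinset s ∧ s.card = n} := by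
    refine ⟨Fintype.card V', ?_⟩
    rintro n ⟨t, _, rfl⟩
    exact Finset.card_le_univ t
  have hIne : {n | ∃ s : Finset V', G'.IsIndepFinset s ∧ s.card = n}.Nonempty :=
    ⟨0, ∅, by simp [SimpleGraph.IsIndepFinset], rfl⟩
  have hTne : {n | ∃ C : Finset (Finset V'), G'.IsCliqueCover C ∧ C.card = n}.Nonempty :=
    ⟨C.card, C, hCcover, rfl⟩
  refine le_antisymm ?_ ?_
  · calc cliqueCoverNum G' ≤ C.card := Nat.sInf_le ⟨C, hCcover, rfl⟩
      _ = s.card := hcard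
      _ ≤ _root_.indepNum G' := le_csSup hbdd ⟨s, hsind, rfl⟩
  · obtain ⟨C₀, hC₀, hC₀card⟩ := Nat.sInf_mem hTne
    refine csSup_le hIne ?_
    rintro n ⟨t, ht, rfl⟩
    calc t.card ≤ C₀.card := indep_card_le_cover_card G' t ht C₀ hC₀
      _ = cliqueCoverNum G' := hC₀card
end

section
/- Let G be a graph and H an interval supergraph of G such that V can be partitioned into sets A, B, C where A and B are separated in G, and H[C] is a clique. Then β(G) ≤ β(G[A]) + β(G[B]) + φ(G,H)·α(G[C]), where φ(G,H) = max over W with H[W] a clique of β(G[W])/α(G[W]). -/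
open SimpleGraph

lemma cover_singletons {V : Type*} [Fintype V] (G : SimpleGraph V) :
    ∃ C : Finset (Finset V), G.IsCliqueCover C := by
  classical
  refine ⟨Finset.univ.image (fun v => {v}), ?_, ?_⟩
  · intro c hc
    simp only [Finset.mem_image] at hc
    obtain ⟨v, _, rfl⟩ := hc
    simp [SimpleGraph.isClique_singleton]
  · intro v
    exact ⟨{v}, by simp, by simp⟩

lemma exists_min_cover {V : Type*} [Fintype V] (G : SimpleGraph V) :
    ∃ C : Finset (Finset V), G.IsCliqueCover C ∧ C.card = cliqueCoverNum G := by
  obtain ⟨C, hC⟩ := cover_singletons G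
  have hne : {n | ∃ C : Finset (Finset V), G.IsCliqueCover C ∧ C.card = n}.Nonempty :=
    ⟨C.card, C, hC, rfl⟩
  have h : cliqueCoverNum G ∈
      {n | ∃ C : Finset (Finset V), G.IsCliqueCover C ∧ C.card = n} := Nat.sInf_mem hne
  exact h

lemma cliqueCoverNum_le {V : Type*} (G : SimpleGraph V)
    (C : Finset (Finset V)) (hC : G.IsCliqueCover C) : cliqueCoverNum G ≤ C.card :=
  Nat.sInf_le ⟨C, hC, rfl⟩

lemma lift_cover {V : Type*} (G : SimpleGraph V) (S : Set V)
    (D : Finset (Finset ↥S)) (hD : (G.induce S).IsCliqueCover D) :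
    ∃ F : Finset (Finset V), F.card ≤ D.card ∧
      (∀ c ∈ F, G.IsClique (c : Set V)) ∧ (∀ v ∈ S, ∃ c ∈ F, v ∈ c) := by
  classical
  refine ⟨D.image (fun c => c.image Subtype.val), Finset.card_image_le, ?_, ?_⟩
  · intro c hc
    simp only [Finset.mem_image] at hc
    obtain ⟨d, hd, rfl⟩ := hc
    intro x hx y hy hxy
    simp only [Finset.coe_image, Set.mem_image, Finset.mem_coe] at hx hy
    obtain ⟨u, hu, rfl⟩ := hx
    obtain ⟨w, hw, rfl⟩ := hy
    have h := (hD.1 d hd) hu hw (fun h => hxy (by rw [h]))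
    exact h
  · intro v hv
    obtain ⟨c, hc, hvc⟩ := hD.2 ⟨v, hv⟩
    exact ⟨c.image Subtype.val, Finset.mem_image_of_mem _ hc,
      Finset.mem_image_of_mem _ hvc⟩

lemma indepNum_pos_of_nonempty {V : Type*} [Fintype V] (G : SimpleGraph V)
    (S : Set V) (hS : S.Nonempty) : 1 ≤ _root_.indepNum (G.induce S) := by
  classical
  haveI : Fintype ↥S := Fintype.ofFinite _
  obtain ⟨c, hc⟩ := hS
  have hmem : (1 : ℕ) ∈ {n | ∃ s : Finset ↥S, (G.induce S).IsIndepFinset s ∧ s.card = n} := by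
    refine ⟨{⟨c, hc⟩}, ?_, by simp⟩
    simp [SimpleGraph.IsIndepFinset, Set.pairwise_singleton]
  have hbdd : BddAbove {n | ∃ s : Finset ↥S, (G.induce S).IsIndepFinset s ∧ s.card = n} := by
    refine ⟨Fintype.card ↥S, ?_⟩
    rintro n ⟨s, _, rfl⟩
    exact Finset.card_le_univ s
  exact le_csSup hbdd hmem

lemma cliqueCoverNum_empty {V : Type*} (G : SimpleGraph V) (S : Set V)
    (hS : S = ∅) : cliqueCoverNum (G.induce S) = 0 := by
  have h0 : cliqueCoverNum (G.induce S) ≤ (∅ : Finset (Finset ↥S)).card := by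
    apply cliqueCoverNum_le
    constructor
    · intro c hc; simp at hc
    · intro v
      exact absurd v.2 (by simp [hS])
  simpa using h0

lemma indepNum_empty {V : Type*} (G : SimpleGraph V) (S : Set V)
    (hS : S = ∅) : _root_.indepNum (G.induce S) = 0 := by
  have hne : (0 : ℕ) ∈ {n | ∃ s : Finset ↥S, (G.induce S).IsIndepFinset s ∧ s.card = n} := by
    refine ⟨∅, ?_, by simp⟩
    simp [SimpleGraph.IsIndepFinset]
  have hle : _root_.indepNum (G.induce S) ≤ 0 := by
    apply csSup_le ⟨0, hne⟩
    rintro n ⟨s, _, rfl⟩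
    have hs : s = ∅ := by
      apply Finset.eq_empty_of_forall_notMem
      intro v _
      exact absurd v.2 (by simp [hS])
    simp [hs]
  omega

lemma phi_ge {V : Type*} [Fintype V] (G H : SimpleGraph V) (C : Set V)
    (hC : H.IsClique C) :
    (cliqueCoverNum (G.induce C) : ℝ) / (_root_.indepNum (G.induce C) : ℝ) ≤ phi G H := by
  classical
  haveI : Fintype ↥C := Fintype.ofFinite _
  apply le_csSup
  · apply Set.Finite.bddAbove
    apply Set.Finite.subset (Set.finite_range
      (fun W : Finset V => (cliqueCoverNum (G.induce (W : Set V)) : ℝ) /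
        (_root_.indepNum (G.induce (W : Set V)) : ℝ)))
    rintro x ⟨W, _, rfl⟩
    exact ⟨W, rfl⟩
  · refine ⟨C.toFinset, ?_, ?_⟩
    · rw [Set.coe_toFinset]; exact hC
    · rw [Set.coe_toFinset]

theorem clique_cover_partition_bound {V : Type*} [Fintype V]
    (G H : SimpleGraph V) (hle : G ≤ H) (A B C : Set V)
    (hAB : Disjoint A B) (hAC : Disjoint A C) (hBC : Disjoint B C)
    (hcover : A ∪ B ∪ C = Set.univ)
    (hsep : ∀ a ∈ A, ∀ b ∈ B, ¬ G.Adj a b)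
    (hC : H.IsClique C) :
    (cliqueCoverNum G : ℝ) ≤
      (cliqueCoverNum (G.induce A) : ℝ) + (cliqueCoverNum (G.induce B) : ℝ) +
        phi G H * (_root_.indepNum (G.induce C) : ℝ) := by
  classical
  haveI : Fintype ↥A := Fintype.ofFinite _
  haveI : Fintype ↥B := Fintype.ofFinite _
  haveI : Fintype ↥C := Fintype.ofFinite _
  -- Step 1: natural-number bound via union of covers
  obtain ⟨DA, hDA, hcardA⟩ := exists_min_cover (G.induce A)
  obtain ⟨DB, hDB, hcardB⟩ := exists_min_cover (G.induce B)
  obtain ⟨DC, hDC, hcardC⟩ := exists_min_cover (G.induce C)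
  obtain ⟨FA, hFAcard, hFAcl, hFAcov⟩ := lift_cover G A DA hDA
  obtain ⟨FB, hFBcard, hFBcl, hFBcov⟩ := lift_cover G B DB hDB
  obtain ⟨FC, hFCcard, hFCcl, hFCcov⟩ := lift_cover G C DC hDC
  have hcov : G.IsCliqueCover (FA ∪ FB ∪ FC) := by
    constructor
    · intro c hc
      simp only [Finset.mem_union] at hc
      rcases hc with (hc | hc) | hc
      · exact hFAcl c hc
      · exact hFBcl c hc
      · exact hFCcl c hc
    · intro v
      have hv : v ∈ A ∪ B ∪ C := hcover ▸ Set.mem_univ v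
      rcases hv with (hv | hv) | hv
      · obtain ⟨c, hc, hvc⟩ := hFAcov v hv
        exact ⟨c, Finset.mem_union_left _ (Finset.mem_union_left _ hc), hvc⟩
      · obtain ⟨c, hc, hvc⟩ := hFBcov v hv
        exact ⟨c, Finset.mem_union_left _ (Finset.mem_union_right _ hc), hvc⟩
      · obtain ⟨c, hc, hvc⟩ := hFCcov v hv
        exact ⟨c, Finset.mem_union_right _ hc, hvc⟩
  have hnat : cliqueCoverNum G ≤
      cliqueCoverNum (G.induce A) + cliqueCoverNum (G.induce B) +
        cliqueCoverNum (G.induce C) := by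
    calc cliqueCoverNum G ≤ (FA ∪ FB ∪ FC).card := cliqueCoverNum_le G _ hcov
      _ ≤ (FA ∪ FB).card + FC.card := Finset.card_union_le _ _
      _ ≤ FA.card + FB.card + FC.card := by
          have := Finset.card_union_le FA FB
          omega
      _ ≤ _ := by omega
  -- Step 2: β(G[C]) ≤ φ(G,H) * α(G[C])
  have hstep2 : (cliqueCoverNum (G.induce C) : ℝ) ≤
      phi G H * (_root_.indepNum (G.induce C) : ℝ) := by
    by_cases hCe : C = ∅
    · rw [cliqueCoverNum_empty G C hCe, indepNum_empty G C hCe]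
      simp
    · have hne : C.Nonempty := Set.nonempty_iff_ne_empty.mpr hCe
      have hpos : (0 : ℝ) < (_root_.indepNum (G.induce C) : ℝ) := by
        have := indepNum_pos_of_nonempty G C hne
        exact_mod_cast Nat.lt_of_lt_of_le Nat.zero_lt_one this
      have := phi_ge G H C hC
      rw [div_le_iff₀ hpos] at this
      linarith
  -- Combine
  have hcast : (cliqueCoverNum G : ℝ) ≤
      (cliqueCoverNum (G.induce A) : ℝ) + (cliqueCoverNum (G.induce B) : ℝ) +
        (cliqueCoverNum (G.induce C) : ℝ) := by exact_mod_cast hnat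
  linarith
end
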